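/- The curves F₁: w² = z(z−1)(z+3) and F₂: y⁴ − u²(6y−4)y + u⁴(4y−3) = 0 are birationally related: if (z,w) lies on F₁ with z ≠ 0, then y = −w²/(4z) and u = (1/4)(1 − z⁻¹)w satisfy F₂; conversely, if (y,u) lies on F₂ with y ≠ 0, y ≠ 1, u(u²−1) ≠ 0, then z = 2 − 3u²/y − (u²−1)/(y−1) and w = ((5y−3)u² − y³ − y²)/(u(u²−1)) satisfy F₁, and these maps are mutually inverse where defined. -/

import Mathlib

theorem torus_birational :
    (∀ z w : ℂ, z ≠ 0 → w ^ 2 = z * (z - 1) * (z + 3) →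
      ∀ y u : ℂ, y = -(w ^ 2) / (4 * z) → u = (1 / 4) * (1 - z⁻¹) * w →
        (y ^ 4 - u ^ 2 * (6 * y - 4) * y + u ^ 4 * (4 * y - 3) = 0
          ∧ (y ≠ 0 → y ≠ 1 → u * (u ^ 2 - 1) ≠ 0 →
              z = 2 - 3 * u ^ 2 / y - (u ^ 2 - 1) / (y - 1)
                ∧ w = ((5 * y - 3) * u ^ 2 - y ^ 3 - y ^ 2) / (u * (u ^ 2 - 1)))))
    ∧
    (∀ y u : ℂ, y ^ 4 - u ^ 2 * (6 * y - 4) * y + u ^ 4 * (4 * y - 3) = 0 →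
      y ≠ 0 → y ≠ 1 → u * (u ^ 2 - 1) ≠ 0 →
      ∀ z w : ℂ, z = 2 - 3 * u ^ 2 / y - (u ^ 2 - 1) / (y - 1) →
        w = ((5 * y - 3) * u ^ 2 - y ^ 3 - y ^ 2) / (u * (u ^ 2 - 1)) →
        (w ^ 2 = z * (z - 1) * (z + 3)
          ∧ (z ≠ 0 → y = -(w ^ 2) / (4 * z) ∧ u = (1 / 4) * (1 - z⁻¹) * w))) := by
  constructor
  · intro z w hz h y u hy hu
    have h4 : (4 * z : ℂ) ≠ 0 := by simp [hz]
    have hs : y * (4 * z) = -(w ^ 2) := by rw [hy]; field_simp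
    have ht : u * (4 * z) = (z - 1) * w := by rw [hu]; field_simp
    refine ⟨?_, fun hy0 hy1 hu0 => ⟨?_, ?_⟩⟩
    · have key : (4 * z) ^ 5 * (y ^ 4 - u ^ 2 * (6 * y - 4) * y + u ^ 4 * (4 * y - 3)) = 0 := by
        linear_combination (4*(u*(4*z)-(z-1)*w)^4 + -16*w*(u*(4*z)-(z-1)*w)^3 + 24*w^2*(u*(4*z)-(z-1)*w)^2 + -16*w^3*(u*(4*z)-(z-1)*w) + 4*w^4 + -24*z*(y*(4*z)+w^2)*(u*(4*z)-(z-1)*w)^2 + 4*z*(y*(4*z)+w^2)^3 + 16*z*w*(u*(4*z)-(z-1)*w)^3 + 48*z*w*(y*(4*z)+w^2)*(u*(4*z)-(z-1)*w) + -24*z*w^2*(y*(4*z)+w^2) + -16*z*w^2*(y*(4*z)+w^2)^2 + -48*z*w^3*(u*(4*z)-(z-1)*w) + 32*z*w^4 + 24*z*w^4*(y*(4*z)+w^2) + -16*z*w^6 + 64*z^2*(u*(4*z)-(z-1)*w)^2 + -128*z^2*w*(u*(4*z)-(z-1)*w) + -48*z^2*w*(y*(4*z)+w^2)*(u*(4*z)-(z-1)*w)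 + 64*z^2*w^2 + 24*z^2*w^2*(u*(4*z)-(z-1)*w)^2 + 48*z^2*w^2*(y*(4*z)+w^2) + 48*z^2*w^3*(u*(4*z)-(z-1)*w) + -72*z^2*w^4 + 128*z^3*w*(u*(4*z)-(z-1)*w) + -128*z^3*w^2 + -24*z^3*w^2*(y*(4*z)+w^2) + 16*z^3*w^3*(u*(4*z)-(z-1)*w) + 32*z^3*w^4 + 64*z^4*w^2 + 4*z^4*w^4) * hs + (-4*w^2*(u*(4*z)-(z-1)*w)^3 + 16*w^3*(u*(4*z)-(z-1)*w)^2 + -24*w^4*(u*(4*z)-(z-1)*w) + 16*w^5 + -12*z*(u*(4*z)-(z-1)*w)^3 + 48*z*w*(u*(4*z)-(z-1)*w)^2 + -72*z*w^2*(u*(4*z)-(z-1)*w) + 48*z*w^3 + -16*z*w^3*(u*(4*z)-(z-1)*w)^2 + 24*z*w^4*(u*(4*z)-(z-1)*w) + -48*z^2*w*(u*(4*z)-(z-1)*w)^2 + 80*z^2*w^2*(u*(4*z)-(z-1)*w) + -16*z^2*w^3 + -24*z^2*w^4*(u*(4*z)-(z-1)*w) + -72*z^3*w^2*(u*(4*z)-(z-1)*w)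 + 16*z^3*w^3 + -16*z^3*w^5 + -48*z^4*w^3) * ht + (-4*w^4 + -8*z*w^4 + 4*z*w^6 + 12*z^2*w^4) * h
      exact (mul_eq_zero.mp key).resolve_left (pow_ne_zero 5 h4)
    · have key : (4 * z) ^ 3 * (z * (y * (y - 1))) =
          (4 * z) ^ 3 * (2 * y * (y - 1) - 3 * u ^ 2 * (y - 1) - (u ^ 2 - 1) * y) := by
        linear_combination (4*(u*(4*z)-(z-1)*w)^2 + -8*w*(u*(4*z)-(z-1)*w) + 4*w^2 + -8*z*(y*(4*z)+w^2) + 8*z*w*(u*(4*z)-(z-1)*w) + 8*z*w^2 + 16*z^2 + 4*z^2*(y*(4*z)+w^2) + -4*z^2*w^2 + -16*z^3) * hs + (-4*w^2*(u*(4*z)-(z-1)*w) + 8*w^3 + -12*z*(u*(4*z)-(z-1)*w) + 24*z*w + -8*z*w^3 + -24*z^2*w) * ht + (-4*w^2) * h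
      have hzy : z * (y * (y - 1)) = 2 * y * (y - 1) - 3 * u ^ 2 * (y - 1) - (u ^ 2 - 1) * y :=
        mul_left_cancel₀ (pow_ne_zero 3 h4) key
      have hy1' : y - 1 ≠ 0 := sub_ne_zero.mpr hy1
      field_simp
      linear_combination hzy
    · have key : (4 * z) ^ 3 * (w * (u * (u ^ 2 - 1))) =
          (4 * z) ^ 3 * ((5 * y - 3) * u ^ 2 - y ^ 3 - y ^ 2) := by
        linear_combination (-5*(u*(4*z)-(z-1)*w)^2 + (y*(4*z)+w^2)^2 + 10*w*(u*(4*z)-(z-1)*w) + -5*w^2 + -3*w^2*(y*(4*z)+w^2) + 3*w^4 + 4*z*(y*(4*z)+w^2) + -10*z*w*(u*(4*z)-(z-1)*w) + 2*z*w^2 + -5*z^2*w^2) * hs + (w*(u*(4*z)-(z-1)*w)^2 + 2*w^2*(u*(4*z)-(z-1)*w) + -7*w^3 + 12*z*(u*(4*z)-(z-1)*w) + -24*z*w + 3*z*w^2*(u*(4*z)-(z-1)*w) + 4*z*w^3 + 8*z^2*w + 3*z^2*w^3) * ht + (4*w^2 + -1*w^4) * h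
      have hwu : w * (u * (u ^ 2 - 1)) = (5 * y - 3) * u ^ 2 - y ^ 3 - y ^ 2 :=
        mul_left_cancel₀ (pow_ne_zero 3 h4) key
      rw [eq_div_iff hu0]
      linear_combination hwu
  · intro y u hF2 hy0 hy1 hu0' z w hz hw
    have hy1' : y - 1 ≠ 0 := sub_ne_zero.mpr hy1
    have hD2 : y * (y - 1) ≠ 0 := mul_ne_zero hy0 hy1'
    have hzn : z * (y * (y - 1)) = 2 * y * (y - 1) - 3 * u ^ 2 * (y - 1) - (u ^ 2 - 1) * y := by
      rw [hz]; field_simp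
    have hwn : w * (u * (u ^ 2 - 1)) = (5 * y - 3) * u ^ 2 - y ^ 3 - y ^ 2 := by
      rw [hw]; field_simp; rw [div_eq_iff hu0']; ring
    have hF1 : w ^ 2 = z * (z - 1) * (z + 3) := by
      have key : (y * (y - 1)) ^ 3 * (u * (u ^ 2 - 1)) ^ 2 * (w ^ 2) =
          (y * (y - 1)) ^ 3 * (u * (u ^ 2 - 1)) ^ 2 * (z * (z - 1) * (z + 3)) := by
        linear_combination (-1*u^2*(z*(y*(y-1))-(2*y*(y-1)-3*u^2*(y-1)-(u^2-1)*y))^2 + -9*u^4*(z*(y*(y-1))-(2*y*(y-1)-3*u^2*(y-1)-(u^2-1)*y)) + 2*u^4*(z*(y*(y-1))-(2*y*(y-1)-3*u^2*(y-1)-(u^2-1)*y))^2 + -27*u^6 + 18*u^6*(z*(y*(y-1))-(2*y*(y-1)-3*u^2*(y-1)-(u^2-1)*y)) + -1*u^6*(z*(y*(y-1))-(2*y*(y-1)-3*u^2*(y-1)-(u^2-1)*y))^2 + 54*u^8 + -9*u^8*(z*(y*(y-1))-(2*y*(y-1)-3*u^2*(y-1)-(u^2-1)*y)) + -27*u^10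 + 5*y*u^2*(z*(y*(y-1))-(2*y*(y-1)-3*u^2*(y-1)-(u^2-1)*y)) + 30*y*u^4 + 2*y*u^4*(z*(y*(y-1))-(2*y*(y-1)-3*u^2*(y-1)-(u^2-1)*y)) + 12*y*u^6 + -19*y*u^6*(z*(y*(y-1))-(2*y*(y-1)-3*u^2*(y-1)-(u^2-1)*y)) + -114*y*u^8 + 12*y*u^8*(z*(y*(y-1))-(2*y*(y-1)-3*u^2*(y-1)-(u^2-1)*y)) + 72*y*u^10 + -4*y^2*u^2 + -8*y^2*u^2*(z*(y*(y-1))-(2*y*(y-1)-3*u^2*(y-1)-(u^2-1)*y)) + -80*y^2*u^4 + 16*y^2*u^4*(z*(y*(y-1))-(2*y*(y-1)-3*u^2*(y-1)-(u^2-1)*y)) + 124*y^2*u^6 + -8*y^2*u^6*(z*(y*(y-1))-(2*y*(y-1)-3*u^2*(y-1)-(u^2-1)*y)) + 8*y^2*u^8 + -48*y^2*u^10 + 18*y^3*u^2 + 28*y^3*u^4 + -110*y^3*u^6 + 64*y^3*u^8 + -17*y^4*u^2 + 34*y^4*u^4 + -17*y^4*u^6) * hzn + (-1*y^3*(w*(u*(u^2-1))-((5*y-3)*u^2-y^3-y^2))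 + 6*y^3*u^2 + 3*y^4*(w*(u*(u^2-1))-((5*y-3)*u^2-y^3-y^2)) + -28*y^4*u^2 + 2*y^5 + -3*y^5*(w*(u*(u^2-1))-((5*y-3)*u^2-y^3-y^2)) + 48*y^5*u^2 + -4*y^6 + y^6*(w*(u*(u^2-1))-((5*y-3)*u^2-y^3-y^2)) + -36*y^6*u^2 + 10*y^7*u^2 + 4*y^8 + -2*y^9) * hwn + (9*u^4 + -18*u^6 + 9*u^8 + -3*y*u^2 + -18*y*u^4 + 45*y*u^6 + -24*y*u^8 + 10*y^2*u^2 + -4*y^2*u^4 + -22*y^2*u^6 + 16*y^2*u^8 + -1*y^3 + 12*y^3*u^4 + -8*y^3*u^6 + y^4 + -20*y^4*u^2 + 8*y^4*u^4 + 2*y^5 + 16*y^5*u^2 + -4*y^5*u^4 + -2*y^6 + -4*y^6*u^2 + -1*y^7 + y^8) * hF2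
      exact mul_left_cancel₀ (mul_ne_zero (pow_ne_zero 3 hD2) (pow_ne_zero 2 hu0')) key
    refine ⟨hF1, fun hz0 => ⟨?_, ?_⟩⟩
    · have key : (y * (y - 1)) * (u * (u ^ 2 - 1)) ^ 2 * (y * (4 * z)) =
          (y * (y - 1)) * (u * (u ^ 2 - 1)) ^ 2 * (-(w ^ 2)) := by
        linear_combination (4*y*u^2 + -8*y*u^4 + 4*y*u^6) * hzn + (-1*y*(w*(u*(u^2-1))-((5*y-3)*u^2-y^3-y^2)) + 6*y*u^2 + y^2*(w*(u*(u^2-1))-((5*y-3)*u^2-y^3-y^2)) + -16*y^2*u^2 + 2*y^3 + 10*y^3*u^2 + -2*y^5) * hwn + (-1*y + 8*y*u^2 + -4*y*u^4 + -1*y^2 + -4*y^2*u^2 + y^3 + y^4) * hF2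
      have hyz : y * (4 * z) = -(w ^ 2) :=
        mul_left_cancel₀ (mul_ne_zero hD2 (pow_ne_zero 2 hu0')) key
      rw [eq_div_iff (by simp [hz0] : (4 * z : ℂ) ≠ 0)]
      linear_combination hyz
    · have key : (y * (y - 1)) * (u * (u ^ 2 - 1)) * (u * (4 * z)) =
          (y * (y - 1)) * (u * (u ^ 2 - 1)) * ((z - 1) * w) := by
        linear_combination (-1*(w*(u*(u^2-1))-((5*y-3)*u^2-y^3-y^2)) + -1*u^2 + 4*u^4 + -5*y*u^2 + y^2 + y^3) * hzn + (-3*u^2 + 4*y*u^2 + -1*y^2) * hwn + (1 + -4*u^2 + y) * hF2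
      have huz : u * (4 * z) = (z - 1) * w :=
        mul_left_cancel₀ (mul_ne_zero hD2 hu0') key
      field_simp
      linear_combination huz
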